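/- For a connected graph G, the polytope ∇_G is simplicial (every facet is a simplex) if and only if G has no even cycles. -/

import Mathlib

noncomputable def stdBasis {N : ℕ} (i : Fin N) : Fin N → ℝ := Pi.single i 1

def nabla {N : ℕ} (G : SimpleGraph (Fin N)) : Set (Fin N → ℝ) :=
  {x | ∃ i j, G.Adj i j ∧ x = stdBasis i - stdBasis j}

noncomputable def inn {N : ℕ} (x α : Fin N → ℝ) : ℝ := ∑ i, x i * α i

def IsFace {N : ℕ} (G : SimpleGraph (Fin N)) (F : Set (Fin N → ℝ)) : Prop :=
  ∃ α : Fin N → ℝ, (∀ x ∈ nabla G, -1 ≤ inn x α) ∧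
    F = {x | x ∈ nabla G ∧ inn x α = -1}

def IsFacet {N : ℕ} (G : SimpleGraph (Fin N)) (F : Set (Fin N → ℝ)) : Prop :=
  IsFace G F ∧ Module.finrank ℝ (vectorSpan ℝ F) = N - 2

def faceGraph {N : ℕ} (F : Set (Fin N → ℝ)) : SimpleGraph (Fin N) :=
  SimpleGraph.fromRel (fun i j => stdBasis i - stdBasis j ∈ F)

def MaxBipartiteSubgraph {N : ℕ} (G H : SimpleGraph (Fin N)) : Prop :=
  H ≤ G ∧ H.Colorable 2 ∧ ∀ H', H' ≤ G → H'.Colorable 2 → H ≤ H' → H' = H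

def inducedOn {N : ℕ} (G : SimpleGraph (Fin N)) (s : Set (Fin N)) : SimpleGraph (Fin N) where
  Adj i j := G.Adj i j ∧ i ∈ s ∧ j ∈ s
  symm := ⟨fun i j h => ⟨h.1.symm, h.2.2, h.2.1⟩⟩
  loopless := ⟨fun i h => G.irrefl h.1⟩


namespace Nabla19
open SimpleGraph
variable {N : ℕ}

lemma stdBasis_apply (i j : Fin N) : stdBasis i j = if j = i then 1 else 0 :=
  Pi.single_apply i 1 j

lemma inn_basis_sub (i j : Fin N) (α : Fin N → ℝ) :
    inn (stdBasis i - stdBasis j) α = α i - α j := by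
  unfold inn
  simp only [Pi.sub_apply, stdBasis_apply, sub_mul, ite_mul, one_mul, zero_mul,
    Finset.sum_sub_distrib, Finset.sum_ite_eq', Finset.mem_univ, if_true]

lemma sum_basis_sub (i j : Fin N) : ∑ k, (stdBasis i - stdBasis j) k = 0 := by
  simp only [Pi.sub_apply, stdBasis_apply, Finset.sum_sub_distrib,
    Finset.sum_ite_eq', Finset.mem_univ, if_true, sub_self]

lemma stdBasis_sub_inj {i j a b : Fin N} (hij : i ≠ j)
    (h : stdBasis i - stdBasis j = stdBasis a - stdBasis b) : i = a ∧ j = b := by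
  have hi := congrFun h i
  have hj := congrFun h j
  simp only [Pi.sub_apply, stdBasis_apply, if_pos rfl] at hi hj
  rw [if_neg (fun hh : i = j => hij hh)] at hi
  rw [if_neg (fun hh : j = i => hij hh.symm)] at hj
  constructor
  · by_cases hia : i = a
    · exact hia
    · exfalso; rw [if_neg hia] at hi
      by_cases hib : i = b
      · rw [if_pos hib] at hi; norm_num at hi
      · rw [if_neg hib] at hi; norm_num at hi
  · by_cases hjb : j = b
    · exact hjb
    · exfalso; rw [if_neg hjb] at hj
      by_cases hja : j = a
      · rw [if_pos hja] at hj; norm_num at hj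
      · rw [if_neg hja] at hj; norm_num at hj

def bic (G : SimpleGraph (Fin N)) (α : Fin N → Bool) : SimpleGraph (Fin N) where
  Adj a b := G.Adj a b ∧ α a ≠ α b
  symm := ⟨fun a b h => ⟨h.1.symm, Ne.symm h.2⟩⟩
  loopless := ⟨fun a h => h.2 rfl⟩

lemma support_getElem_eq {G : SimpleGraph (Fin N)} {u w : Fin N} (p : G.Walk u w) :
    ∀ (t : ℕ) (h : t < p.support.length), p.support[t] = p.getVert t := by
  induction p with
  | nil =>
    intro t h
    simp only [Walk.support_nil, List.length_singleton] at h
    interval_cases t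
    simp [Walk.support_nil]
  | @cons a b c h q ih =>
    intro t ht
    cases t with
    | zero => simp [Walk.support_cons]
    | succ r =>
      simp only [Walk.support_cons, List.getElem_cons_succ, Walk.getVert_cons_succ]
      rw [Walk.support_cons] at ht
      exact ih r (by simpa using ht)

lemma edges_getElem_eq {G : SimpleGraph (Fin N)} {u w : Fin N} (p : G.Walk u w) :
    ∀ (t : ℕ) (h : t < p.edges.length),
      p.edges[t] = s(p.getVert t, p.getVert (t + 1)) := by
  induction p with
  | nil => intro t h; simp [Walk.edges_nil] at h
  | @cons a b c h q ih =>
    intro t ht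
    cases t with
    | zero =>
      simp only [Walk.edges_cons, List.getElem_cons_zero, Walk.getVert_zero]
      rw [Walk.getVert_cons_succ, Walk.getVert_zero]
    | succ r =>
      simp only [Walk.edges_cons, List.getElem_cons_succ, Walk.getVert_cons_succ]
      rw [Walk.edges_cons] at ht
      exact ih r (by simpa using ht)

lemma exists_cross {G : SimpleGraph (Fin N)} (t : Finset (Fin N)) :
    ∀ {u w : Fin N} (_ : G.Walk u w), u ∈ t → w ∉ t →
      ∃ a b, G.Adj a b ∧ a ∈ t ∧ b ∉ t := by
  intro u w p
  induction p with
  | nil => intro h1 h2; exact absurd h1 h2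
  | @cons a b c h q ih =>
    intro h1 h2
    by_cases hv : b ∈ t
    · exact ih hv h2
    · exact ⟨a, b, h, h1, hv⟩

lemma grow {G : SimpleGraph (Fin N)} (hG : G.Connected) :
    ∀ (n : ℕ) (t : Finset (Fin N)) (α : Fin N → Bool) (x₀ : Fin N),
      (Finset.univ \ t).card ≤ n → x₀ ∈ t →
      (∀ x ∈ t, ∃ p : (bic G α).Walk x₀ x, ∀ y ∈ p.support, y ∈ t) →
      ∃ α' : Fin N → Bool, (∀ x ∈ t, α' x = α x) ∧
        ∀ x, (bic G α').Reachable x₀ x := by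
  intro n
  induction n with
  | zero =>
    intro t α x₀ hcard _ hwalks
    have ht : ∀ x, x ∈ t := by
      intro x; by_contra hx
      have hmem : x ∈ Finset.univ \ t := by simp [hx]
      have := Finset.card_pos.mpr ⟨x, hmem⟩
      omega
    exact ⟨α, fun x _ => rfl, fun x => (hwalks x (ht x)).elim (fun p _ => ⟨p⟩)⟩
  | succ n ih =>
    intro t α x₀ hcard hx₀ hwalks
    by_cases hall : ∀ x, x ∈ t
    · exact ⟨α, fun x _ => rfl, fun x => (hwalks x (hall x)).elim (fun p _ => ⟨p⟩)⟩
    · push_neg at hall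
      obtain ⟨z, hz⟩ := hall
      obtain ⟨pz⟩ := hG.preconnected x₀ z
      obtain ⟨a, b, hab, hat, hbt⟩ := exists_cross t pz hx₀ hz
      set α₁ := Function.update α b (!(α a)) with hα₁
      have hupd : ∀ x ∈ t, α₁ x = α x := fun x hx =>
        Function.update_of_ne (fun hh => hbt (by rw [← hh]; exact hx)) _ _
      have htrans : ∀ x ∈ t, ∃ p : (bic G α₁).Walk x₀ x, ∀ y ∈ p.support, y ∈ t := by
        intro x hx
        obtain ⟨p, hp⟩ := hwalks x hx
        have hed : ∀ e ∈ p.edges, e ∈ (bic G α₁).edgeSet := by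
          intro e
          refine Sym2.ind (fun c d hcd => ?_) e
          have hadj := p.adj_of_mem_edges hcd
          have hc : c ∈ t := hp _ (Walk.fst_mem_support_of_mem_edges p hcd)
          have hd : d ∈ t := hp _ (Walk.snd_mem_support_of_mem_edges p hcd)
          exact ((bic G α₁).mem_edgeSet).mpr
            ⟨hadj.1, by rw [hupd c hc, hupd d hd]; exact hadj.2⟩
        refine ⟨p.transfer _ hed, ?_⟩
        rw [Walk.support_transfer]
        exact hp
      have hW : ∀ x ∈ insert b t, ∃ p : (bic G α₁).Walk x₀ x,
          ∀ y ∈ p.support, y ∈ insert b t := by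
        intro x hx
        rcases Finset.mem_insert.mp hx with rfl | hx
        · obtain ⟨p, hp⟩ := htrans a hat
          have hadj : (bic G α₁).Adj a x := by
            refine ⟨hab, ?_⟩
            rw [hupd a hat, hα₁, Function.update_self]
            simp
          refine ⟨p.concat hadj, ?_⟩
          intro y hy
          rw [Walk.support_concat] at hy
          rcases List.mem_append.mp hy with hy | hy
          · exact Finset.mem_insert_of_mem (hp y hy)
          · simp only [List.mem_singleton] at hy
            subst hy
            exact Finset.mem_insert_self _ _
        · obtain ⟨p, hp⟩ := htrans x hx
          exact ⟨p, fun y hy => Finset.mem_insert_of_mem (hp y hy)⟩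
      have hsub : Finset.univ \ insert b t ⊆ (Finset.univ \ t).erase b := by
        intro x hx
        simp only [Finset.mem_sdiff, Finset.mem_insert, Finset.mem_univ, true_and,
          not_or] at hx
        simp only [Finset.mem_erase, Finset.mem_sdiff, Finset.mem_univ, true_and]
        exact ⟨hx.1, hx.2⟩
      have hbmem : b ∈ Finset.univ \ t := by simp [hbt]
      have hcard' : (Finset.univ \ insert b t).card ≤ n := by
        have h1 := Finset.card_le_card hsub
        rw [Finset.card_erase_of_mem hbmem] at h1
        omega
      obtain ⟨α', h1, h2⟩ := ih (insert b t) α₁ x₀ hcard'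
        (Finset.mem_insert_of_mem hx₀) hW
      exact ⟨α', fun x hx => (h1 x (Finset.mem_insert_of_mem hx)).trans (hupd x hx), h2⟩

section Cycle

variable {G : SimpleGraph (Fin N)} {v : Fin N} (c : G.Walk v v)

lemma tail_len : c.support.tail.length = c.length := by
  rw [List.length_tail, Walk.length_support]; omega

lemma vert_tail (r : ℕ) (h : r < c.length) :
    c.support.tail[r]'(by rw [tail_len]; exact h) = c.getVert (r + 1) := by
  have h2 : r + 1 < c.support.length := by rw [Walk.length_support]; omega
  have := support_getElem_eq c (r + 1) h2
  rw [List.getElem_tail]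
  exact this

lemma idx_getVert (hc : c.IsCycle) (r : ℕ) (h : r < c.length) :
    c.support.tail.idxOf (c.getVert (r + 1)) = r := by
  rw [← vert_tail c r h]
  exact List.Nodup.idxOf_getElem hc.support_nodup r (by rw [tail_len]; exact h)

/-- the base coloring of the cycle -/
noncomputable def cycCol (u : Fin N) : Bool :=
  decide (Even (c.support.tail.idxOf u))

lemma cycCol_getVert (hc : c.IsCycle) (r : ℕ) (h : r < c.length) :
    cycCol c (c.getVert (r + 1)) = decide (Even r) := by
  unfold cycCol
  rw [idx_getVert c hc r h]

lemma cycCol_alt (hc : c.IsCycle) (hev : Even c.length) (t : ℕ) (h : t < c.length) :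
    cycCol c (c.getVert t) ≠ cycCol c (c.getVert (t + 1)) := by
  have h3 := hc.three_le_length
  cases t with
  | zero =>
    have e1 := cycCol_getVert c hc (c.length - 1) (by omega)
    rw [show c.length - 1 + 1 = c.length from by omega, Walk.getVert_length] at e1
    have e2 := cycCol_getVert c hc 0 (by omega)
    have hodd : ¬ Even (c.length - 1) := by
      rcases hev with ⟨k, hk⟩
      rintro ⟨m, hm⟩
      omega
    show cycCol c (c.getVert 0) ≠ cycCol c (c.getVert 1)
    rw [Walk.getVert_zero, e1, e2]
    simp [hodd]
  | succ r =>
    rw [cycCol_getVert c hc r (by omega), cycCol_getVert c hc (r + 1) h]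
    by_cases he : Even r <;> simp [Nat.even_add_one, he]

end Cycle

lemma bool_ne_true_false {x y : Bool} (h : x ≠ y) (hx : x = true) : y = false := by
  cases y
  · rfl
  · exact absurd (hx.trans rfl) h

lemma bool_ne_false_true {x y : Bool} (h : x ≠ y) (hx : x = false) : y = true := by
  cases y
  · exact absurd (hx.trans rfl) h
  · rfl

theorem facet_of_even_cycle {G : SimpleGraph (Fin N)} (hG : G.Connected)
    {v : Fin N} (c : G.Walk v v) (hc : c.IsCycle) (hev : Even c.length) :
    ∃ F : Set (Fin N → ℝ), IsFacet G F ∧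
      ¬ AffineIndependent ℝ (fun x : F => (x : Fin N → ℝ)) := by
  classical
  have h3 : 3 ≤ c.length := hc.three_le_length
  set L := c.length with hLdef
  set t0 : Finset (Fin N) := c.support.toFinset with ht0
  have hvt : v ∈ t0 := List.mem_toFinset.mpr c.start_mem_support
  have hced : ∀ e ∈ c.edges, e ∈ (bic G (cycCol c)).edgeSet := by
    intro e he
    obtain ⟨r, hr, hre⟩ := List.mem_iff_getElem.mp he
    rw [Walk.length_edges] at hr
    rw [← hre, edges_getElem_eq c r (by rw [Walk.length_edges]; exact hr)]
    exact ((bic G (cycCol c)).mem_edgeSet).mpr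
      ⟨c.adj_getVert_succ hr, cycCol_alt c hc hev r hr⟩
  have hwalks0 : ∀ x ∈ t0, ∃ p : (bic G (cycCol c)).Walk v x,
      ∀ y ∈ p.support, y ∈ t0 := by
    intro x hx
    have hx' : x ∈ (c.transfer (bic G (cycCol c)) hced).support := by
      rw [Walk.support_transfer]; exact List.mem_toFinset.mp hx
    refine ⟨(c.transfer (bic G (cycCol c)) hced).takeUntil x hx', fun y hy => ?_⟩
    have := Walk.support_takeUntil_subset _ hx' hy
    rw [Walk.support_transfer] at this
    exact List.mem_toFinset.mpr this
  obtain ⟨α, hagree0, hreach⟩ :=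
    grow hG (Finset.univ \ t0).card t0 (cycCol c) v le_rfl hvt hwalks0
  have hagree : ∀ x ∈ c.support, α x = cycCol c x :=
    fun x hx => hagree0 x (List.mem_toFinset.mpr hx)
  have hvmem : ∀ r, r ≤ L → c.getVert r ∈ c.support := by
    intro r hr
    have hlt : r < c.support.length := by rw [Walk.length_support]; omega
    rw [← support_getElem_eq c r hlt]
    exact List.getElem_mem _
  have hA : ∀ r, r < L → α (c.getVert r) ≠ α (c.getVert (r + 1)) := by
    intro r hr
    rw [hagree _ (hvmem r (by omega)), hagree _ (hvmem (r + 1) (by omega))]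
    exact cycCol_alt c hc hev r hr
  set αr : Fin N → ℝ := fun u => if α u then 1 else 0 with hαr
  set F : Set (Fin N → ℝ) := {x | x ∈ nabla G ∧ inn x αr = -1} with hF
  have hbound : ∀ x ∈ nabla G, -1 ≤ inn x αr := by
    rintro x ⟨i, j, hadj, rfl⟩
    rw [inn_basis_sub]
    by_cases h1 : α i <;> by_cases h2 : α j <;> simp [hαr, h1, h2] <;> norm_num
  have hpt : ∀ a b : Fin N, G.Adj a b → α a = false → α b = true →
      stdBasis a - stdBasis b ∈ F := by
    intro a b hadj ha hb
    refine ⟨⟨a, b, hadj, rfl⟩, ?_⟩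
    rw [inn_basis_sub]
    simp [hαr, ha, hb]
  have hedgept : ∀ a b : Fin N, (bic G α).Adj a b → α a = false →
      stdBasis a - stdBasis b ∈ F := by
    intro a b hadj ha
    exact hpt a b hadj.1 ha (bool_ne_false_true hadj.2 ha)
  -- a bicolored edge with specified colors
  have hadj01 : (bic G α).Adj (c.getVert 0) (c.getVert 1) :=
    ⟨c.adj_getVert_succ (by omega), hA 0 (by omega)⟩
  obtain ⟨u₀, u₁, hu01, hu₀, hu₁⟩ :
      ∃ u₀ u₁ : Fin N, (bic G α).Adj u₀ u₁ ∧ α u₀ = false ∧ α u₁ = true := by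
    cases hβ : α (c.getVert 0) with
    | false => exact ⟨_, _, hadj01, hβ, bool_ne_false_true hadj01.2 hβ⟩
    | true => exact ⟨_, _, hadj01.symm, bool_ne_true_false hadj01.2 hβ, hβ⟩
  have hx₀F : stdBasis u₀ - stdBasis u₁ ∈ F := hpt _ _ hu01.1 hu₀ hu₁
  -- linear functionals
  set f : (Fin N → ℝ) →ₗ[ℝ] ℝ :=
    { toFun := fun z => ∑ i, z i
      map_add' := fun x y => by simp [Finset.sum_add_distrib]
      map_smul' := fun r x => by simp [Finset.mul_sum] } with hfdef
  set g : (Fin N → ℝ) →ₗ[ℝ] ℝ :=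
    { toFun := fun z => ∑ i, z i * αr i
      map_add' := fun x y => by simp [add_mul, Finset.sum_add_distrib]
      map_smul' := fun r x => by simp [Finset.mul_sum, mul_assoc] } with hgdef
  set Φ : (Fin N → ℝ) →ₗ[ℝ] ℝ × ℝ := f.prod g with hΦ
  have hfb : ∀ a, f (stdBasis a) = 1 := by
    intro a
    show (∑ i, stdBasis a i) = 1
    simp [stdBasis_apply, Finset.sum_ite_eq']
  have hgb : ∀ a, g (stdBasis a) = αr a := by
    intro a
    show (∑ i, stdBasis a i * αr i) = αr a
    simp [stdBasis_apply, ite_mul, Finset.sum_ite_eq']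
  have hfgF : ∀ {x : Fin N → ℝ}, x ∈ F → f x = 0 ∧ g x = -1 := by
    rintro x ⟨⟨i, j, hadj, rfl⟩, hxi⟩
    exact ⟨sum_basis_sub i j, hxi⟩
  have hVle : vectorSpan ℝ F ≤ LinearMap.ker Φ := by
    rw [vectorSpan_def, Submodule.span_le]
    rintro z ⟨x, hx, y, hy, rfl⟩
    have h1 := hfgF hx
    have h2 := hfgF hy
    rw [SetLike.mem_coe, LinearMap.mem_ker]
    have e1 : f (x - y) = 0 := by rw [map_sub, h1.1, h2.1, sub_zero]
    have e2 : g (x - y) = 0 := by rw [map_sub, h1.2, h2.2]; ring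
    show (f (x - y), g (x - y)) = 0
    rw [e1, e2]
    rfl
  -- claim C : same-colored vertices give differences in the span
  have hx0sub : ∀ {y : Fin N → ℝ}, y ∈ F →
      y - (stdBasis u₀ - stdBasis u₁) ∈ vectorSpan ℝ F := by
    intro y hy
    have := vsub_mem_vectorSpan ℝ hy hx₀F
    rwa [vsub_eq_sub] at this
  have claimC : ∀ (a b : Fin N) (p : (bic G α).Walk a b),
      (α a = α b → stdBasis a - stdBasis b ∈ vectorSpan ℝ F) ∧
      (α a ≠ α b →
        (if α a then stdBasis a - stdBasis b + (stdBasis u₀ - stdBasis u₁)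
         else stdBasis a - stdBasis b - (stdBasis u₀ - stdBasis u₁)) ∈ vectorSpan ℝ F) := by
    intro a b p
    induction p with
    | nil =>
      refine ⟨fun _ => ?_, fun h => absurd rfl h⟩
      rw [sub_self]; exact (vectorSpan ℝ F).zero_mem
    | @cons a w' b h q ih =>
      constructor
      · intro hab
        by_cases ha : α a
        · -- α a = true, α w' = false, α b = true
          have hw' : α w' = false := bool_ne_true_false h.2 ha
          have h1 := hx0sub (hedgept w' a h.symm hw')
          have ihm := ih.2 (by rw [hw', ← hab, ha]; simp)
          rw [if_neg (by simp [hw'])] at ihm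
          have heq : stdBasis a - stdBasis b
              = -((stdBasis w' - stdBasis a) - (stdBasis u₀ - stdBasis u₁))
                + ((stdBasis w' - stdBasis b) - (stdBasis u₀ - stdBasis u₁)) := by
            abel
          rw [heq]
          exact Submodule.add_mem _ (Submodule.neg_mem _ h1) ihm
        · -- α a = false, α w' = true, α b = false
          have ha' : α a = false := by cases hh : α a; rfl; exact absurd hh ha
          have hw' : α w' = true := bool_ne_false_true h.2 ha'
          have h1 := hx0sub (hedgept a w' h ha')
          have ihm := ih.2 (by rw [hw', ← hab, ha']; simp)
          rw [if_pos (by simp [hw'])] at ihm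
          have heq : stdBasis a - stdBasis b
              = ((stdBasis a - stdBasis w') - (stdBasis u₀ - stdBasis u₁))
                + ((stdBasis w' - stdBasis b) + (stdBasis u₀ - stdBasis u₁)) := by
            abel
          rw [heq]
          exact Submodule.add_mem _ h1 ihm
      · intro hab
        by_cases ha : α a
        · -- α a = true, α b = false, α w' = false = α b
          have hw' : α w' = false := bool_ne_true_false h.2 ha
          have hb : α b = false := bool_ne_true_false hab ha
          have h1 := hx0sub (hedgept w' a h.symm hw')
          have ihe := ih.1 (hw'.trans hb.symm)
          rw [if_pos (by simp [ha])]
          have heq : stdBasis a - stdBasis b + (stdBasis u₀ - stdBasis u₁)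
              = -((stdBasis w' - stdBasis a) - (stdBasis u₀ - stdBasis u₁))
                + (stdBasis w' - stdBasis b) := by
            abel
          rw [heq]
          exact Submodule.add_mem _ (Submodule.neg_mem _ h1) ihe
        · -- α a = false, α b = true, α w' = true = α b
          have ha' : α a = false := by cases hh : α a; rfl; exact absurd hh ha
          have hw' : α w' = true := bool_ne_false_true h.2 ha'
          have hb : α b = true := bool_ne_false_true hab ha'
          have h1 := hx0sub (hedgept a w' h ha')
          have ihe := ih.1 (hw'.trans hb.symm)
          rw [if_neg (by simp [ha'])]
          have heq : stdBasis a - stdBasis b - (stdBasis u₀ - stdBasis u₁)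
              = ((stdBasis a - stdBasis w') - (stdBasis u₀ - stdBasis u₁))
                + (stdBasis w' - stdBasis b) := by
            abel
          rw [heq]
          exact Submodule.add_mem _ h1 ihe
  have claimC' : ∀ a b : Fin N, α a = α b →
      stdBasis a - stdBasis b ∈ vectorSpan ℝ F := by
    intro a b hab
    obtain ⟨p⟩ := (hreach a).symm.trans (hreach b)
    exact (claimC a b p).1 hab
  -- representation of an arbitrary vector
  have hrep : ∀ y : Fin N → ℝ, y = ∑ i, y i • stdBasis i := by
    intro y
    funext j
    rw [Finset.sum_apply]
    simp [stdBasis_apply, Finset.sum_ite_eq, mul_ite]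
  have hkerle : LinearMap.ker Φ ≤ vectorSpan ℝ F := by
    intro z hz
    rw [LinearMap.mem_ker] at hz
    have hfz : f z = 0 := congrArg Prod.fst hz
    have hgz : g z = 0 := congrArg Prod.snd hz
    set ρ : Fin N → Fin N := fun i => if α i then u₁ else u₀ with hρ
    have hsum2 : ∑ i, z i • stdBasis (ρ i) = 0 := by
      have hsplit : ∀ i : Fin N, z i • stdBasis (ρ i)
          = (if α i then z i • stdBasis u₁ else z i • stdBasis u₀) := by
        intro i; by_cases hh : α i <;> simp [hρ, hh]
      rw [Finset.sum_congr rfl fun i _ => hsplit i, Finset.sum_ite]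
      rw [← Finset.sum_smul, ← Finset.sum_smul]
      have hg1 : ∑ i ∈ Finset.univ.filter (fun i => α i = true), z i = 0 := by
        have hh : ∑ i, z i * αr i
            = ∑ i ∈ Finset.univ.filter (fun i => α i = true), z i := by
          rw [Finset.sum_filter]
          refine Finset.sum_congr rfl fun i _ => ?_
          by_cases hh2 : α i <;> simp [hαr, hh2]
        rw [← hh]
        exact hgz
      have htot : ∑ i ∈ Finset.univ.filter (fun i => α i = true), z i
          + ∑ i ∈ Finset.univ.filter (fun i => ¬ (α i = true)), z i = 0 := by
        rw [Finset.sum_filter_add_sum_filter_not]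
        exact hfz
      have hg0 : ∑ i ∈ Finset.univ.filter (fun i => ¬ (α i = true)), z i = 0 := by
        rw [hg1] at htot; linarith
      rw [hg1, hg0, zero_smul, zero_smul, add_zero]
    have hz2 : z = ∑ i, z i • (stdBasis i - stdBasis (ρ i)) := by
      have h1 : ∑ i, z i • (stdBasis i - stdBasis (ρ i))
          = ∑ i, z i • stdBasis i - ∑ i, z i • stdBasis (ρ i) := by
        rw [← Finset.sum_sub_distrib]
        exact Finset.sum_congr rfl fun i _ => smul_sub _ _ _
      rw [h1, hsum2, sub_zero]
      exact hrep z
    rw [hz2]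
    refine Submodule.sum_mem _ fun i _ => Submodule.smul_mem _ _ ?_
    refine claimC' i (ρ i) ?_
    by_cases hh : α i <;> simp [hρ, hh, hu₀, hu₁]
  -- dimension count
  have hsurj : Function.Surjective Φ := by
    rintro ⟨x, y⟩
    refine ⟨(x - y) • stdBasis u₀ + y • stdBasis u₁, ?_⟩
    have h0 : αr u₀ = 0 := by simp [hαr, hu₀]
    have h1 : αr u₁ = 1 := by simp [hαr, hu₁]
    show (f _, g _) = (x, y)
    rw [map_add, map_add, map_smul, map_smul, map_smul, map_smul,
      hfb, hfb, hgb, hgb, h0, h1]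
    simp only [smul_eq_mul, mul_one, mul_zero]
    rw [Prod.mk.injEq]
    constructor
    · ring
    · ring
  have hrange : LinearMap.range Φ = ⊤ := LinearMap.range_eq_top.mpr hsurj
  have hrk := Φ.finrank_range_add_finrank_ker
  rw [hrange, finrank_top] at hrk
  have hNN : Module.finrank ℝ (Fin N → ℝ) = N := by
    rw [Module.finrank_fintype_fun_eq_card, Fintype.card_fin]
  have h22 : Module.finrank ℝ (ℝ × ℝ) = 2 := by
    rw [Module.finrank_prod, Module.finrank_self]
  rw [hNN, h22] at hrk
  have hspan : vectorSpan ℝ F = LinearMap.ker Φ := le_antisymm hVle hkerle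
  have hdim : Module.finrank ℝ (vectorSpan ℝ F) = N - 2 := by
    rw [hspan]; omega
  -- the affine dependence coming from the cycle
  have hcedge : ∀ r : ℕ, r < L → G.Adj (c.getVert r) (c.getVert (r + 1)) :=
    fun r hr => c.adj_getVert_succ hr
  set pt : ℕ → (Fin N → ℝ) := fun r =>
    if α (c.getVert r) then stdBasis (c.getVert (r + 1)) - stdBasis (c.getVert r)
    else stdBasis (c.getVert r) - stdBasis (c.getVert (r + 1)) with hptdef
  have hptF : ∀ r, r < L → pt r ∈ F := by
    intro r hr
    by_cases hh : α (c.getVert r)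
    · rw [hptdef]
      simp only [if_pos hh]
      exact hpt _ _ (hcedge r hr).symm (bool_ne_true_false (hA r hr) hh) hh
    · have hh' : α (c.getVert r) = false := by
        cases hx : α (c.getVert r); rfl; exact absurd hx hh
      rw [hptdef]
      simp only [if_neg hh]
      exact hpt _ _ (hcedge r hr) hh' (bool_ne_false_true (hA r hr) hh')
  have hptinj : ∀ r r' : ℕ, r < L → r' < L → pt r = pt r' → r = r' := by
    intro r r' hr hr' hE
    have hedge : s(c.getVert r, c.getVert (r + 1))
        = s(c.getVert r', c.getVert (r' + 1)) := by
      rw [hptdef] at hE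
      simp only at hE
      by_cases h1 : α (c.getVert r) <;> by_cases h2 : α (c.getVert r')
      · rw [if_pos h1, if_pos h2] at hE
        obtain ⟨e1, e2⟩ := stdBasis_sub_inj (hcedge r hr).symm.ne hE
        rw [e1, e2]
      · rw [if_pos h1, if_neg h2] at hE
        obtain ⟨e1, e2⟩ := stdBasis_sub_inj (hcedge r hr).symm.ne hE
        rw [e2, e1, Sym2.eq_swap]
      · rw [if_neg h1, if_pos h2] at hE
        obtain ⟨e1, e2⟩ := stdBasis_sub_inj (hcedge r hr).ne hE
        rw [e1, e2, Sym2.eq_swap]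
      · rw [if_neg h1, if_neg h2] at hE
        obtain ⟨e1, e2⟩ := stdBasis_sub_inj (hcedge r hr).ne hE
        rw [e1, e2]
    have hEE : c.edges[r]'(by rw [Walk.length_edges]; exact hr)
        = c.edges[r']'(by rw [Walk.length_edges]; exact hr') := by
      rw [edges_getElem_eq c r (by rw [Walk.length_edges]; exact hr),
        edges_getElem_eq c r' (by rw [Walk.length_edges]; exact hr')]
      exact hedge
    exact (List.Nodup.getElem_inj_iff hc.isCircuit.isTrail.edges_nodup).mp hEE
  refine ⟨F, ⟨⟨αr, hbound, hF⟩, hdim⟩, ?_⟩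
  intro haff
  have h0lt : 0 < L := by omega
  set m : Fin L → {x // x ∈ F} := fun r => ⟨pt r.val, hptF r.val r.isLt⟩ with hm
  have hminj : Function.Injective m := by
    intro r r' hh
    have := congrArg Subtype.val hh
    exact Fin.ext (hptinj r.val r'.val r.isLt r'.isLt this)
  have haff2 := haff.comp_embedding ⟨m, hminj⟩
  rw [affineIndependent_iff] at haff2
  set WT : ℕ → ℝ := fun r => if α (c.getVert r) then -1 else 1 with hWT
  have hWalt : ∀ r, r < L → WT (r + 1) = - WT r := by
    intro r hr
    rw [hWT]
    simp only
    by_cases hh : α (c.getVert r)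
    · rw [if_pos hh, if_neg (by rw [bool_ne_true_false (hA r hr) hh]; simp)]
      norm_num
    · have hh' : α (c.getVert r) = false := by
        cases hx : α (c.getVert r); rfl; exact absurd hx hh
      rw [if_neg hh, if_pos (bool_ne_false_true (hA r hr) hh')]
  have hWpow : ∀ r, r < L → WT r = (-1) ^ r * WT 0 := by
    intro r
    induction r with
    | zero => intro _; simp
    | succ n ihn =>
      intro hlt
      rw [hWalt n (by omega), ihn (by omega), pow_succ]
      ring
  have hsumw : ∑ r : Fin L, WT r.val = 0 := by
    rw [Fin.sum_univ_eq_sum_range WT L]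
    rw [Finset.sum_congr rfl fun r hr => hWpow r (Finset.mem_range.mp hr)]
    rw [← Finset.sum_mul, geom_sum_eq (by norm_num : (-1 : ℝ) ≠ 1) L,
      Even.neg_one_pow hev]
    norm_num
  have htel : ∑ r : Fin L, WT r.val • pt r.val = 0 := by
    have hterm : ∀ r : ℕ, WT r • pt r
        = stdBasis (c.getVert r) - stdBasis (c.getVert (r + 1)) := by
      intro r
      by_cases hh : α (c.getVert r)
      · rw [hWT, hptdef]
        simp only [if_pos hh]
        rw [neg_smul, one_smul, neg_sub]
      · rw [hWT, hptdef]
        simp only [if_neg hh]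
        rw [one_smul]
    rw [Finset.sum_congr rfl fun r _ => hterm r.val]
    rw [Fin.sum_univ_eq_sum_range
      (fun r => stdBasis (c.getVert r) - stdBasis (c.getVert (r + 1))) L]
    rw [Finset.sum_range_sub' (fun r => stdBasis (c.getVert r)) L]
    rw [Walk.getVert_zero, Walk.getVert_length, sub_self]
  have htel' : ∑ r ∈ Finset.univ, (fun r : Fin L => WT r.val) r •
      ((fun x : {x // x ∈ F} => (x : Fin N → ℝ)) ∘ (⟨m, hminj⟩ : Fin L ↪ {x // x ∈ F})) r
      = 0 := htel
  have hzero := haff2 Finset.univ (fun r : Fin L => WT r.val) hsumw htel'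
    ⟨0, h0lt⟩ (Finset.mem_univ _)
  have hz0 : WT 0 = 0 := hzero
  rw [hWT] at hz0
  simp only [Walk.getVert_zero] at hz0
  by_cases hh : α v
  · rw [if_pos hh] at hz0; norm_num at hz0
  · rw [if_neg hh] at hz0; norm_num at hz0

theorem indep_of_no_even {N : ℕ} (G : SimpleGraph (Fin N))
    (hno : ∀ (v : Fin N) (c : G.Walk v v), c.IsCycle → ¬ Even c.length)
    (α : Fin N → ℝ) :
    AffineIndependent ℝ
      (fun x : {x | x ∈ nabla G ∧ inn x α = -1} => (x : Fin N → ℝ)) := by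
  classical
  set F : Set (Fin N → ℝ) := {x | x ∈ nabla G ∧ inn x α = -1} with hF
  have hmem : ∀ x ∈ F, ∃ i j : Fin N,
      G.Adj i j ∧ x = stdBasis i - stdBasis j ∧ α i - α j = -1 := by
    rintro x ⟨⟨i, j, hadj, rfl⟩, hx2⟩
    exact ⟨i, j, hadj, rfl, by rwa [inn_basis_sub] at hx2⟩
  set H : SimpleGraph (Fin N) :=
    SimpleGraph.fromRel (fun i j => stdBasis i - stdBasis j ∈ F) with hH
  have hHadj : ∀ {a b : Fin N}, (stdBasis a - stdBasis b ∈ F) → a ≠ b → H.Adj a b := by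
    intro a b hx hne; exact ⟨hne, Or.inl hx⟩
  have hHG : ∀ {a b : Fin N}, H.Adj a b → G.Adj a b := by
    rintro a b ⟨hne, hx | hx⟩
    · obtain ⟨i, j, hadj, he, _⟩ := hmem _ hx
      obtain ⟨rfl, rfl⟩ := stdBasis_sub_inj hne he
      exact hadj
    · obtain ⟨i, j, hadj, he, _⟩ := hmem _ hx
      obtain ⟨rfl, rfl⟩ := stdBasis_sub_inj (Ne.symm hne) he
      exact hadj.symm
  have hpar : ∀ {a b : Fin N}, H.Adj a b → α a - α b = 1 ∨ α a - α b = -1 := by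
    rintro a b ⟨hne, hx | hx⟩
    · right; have := hx.2; rwa [inn_basis_sub] at this
    · left; have := hx.2; rw [inn_basis_sub] at this; linarith
  have hwalkpar : ∀ {u w : Fin N} (p : H.Walk u w),
      ∃ m : ℤ, (m : ℝ) = α u - α w ∧ (Even m ↔ Even p.length) := by
    intro u w p
    induction p with
    | nil => exact ⟨0, by simp⟩
    | @cons u v' w h q ih =>
      obtain ⟨m, hm, hp'⟩ := ih
      rcases hpar h with h1 | h1
      · refine ⟨m + 1, by push_cast; linarith, ?_⟩
        rw [Walk.length_cons, Int.even_add_one, Nat.even_add_one]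
        exact not_congr hp'
      · refine ⟨m - 1, by push_cast; linarith, ?_⟩
        rw [Walk.length_cons, Int.even_sub_one, Nat.even_add_one]
        exact not_congr hp'
  have hacyc : ∀ (u : Fin N) (cc : H.Walk u u), ¬ cc.IsCycle := by
    intro u cc hcyc
    have hGedges : ∀ e ∈ cc.edges, e ∈ G.edgeSet := by
      intro e
      refine Sym2.ind (fun a b hab => ?_) e
      exact (G.mem_edgeSet).mpr (hHG (cc.adj_of_mem_edges hab))
    have heven : Even cc.length := by
      obtain ⟨m, hm, hp'⟩ := hwalkpar cc
      have hm0 : (m : ℝ) = 0 := by rw [hm]; ring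
      have : m = 0 := by exact_mod_cast hm0
      exact hp'.mp (by simp [this])
    exact hno u (cc.transfer G hGedges) (hcyc.transfer hGedges)
      (by rwa [Walk.length_transfer])
  rw [affineIndependent_iff]
  intro s w hw hsum e0 he0
  obtain ⟨i0, j0, hadj0, he0x, hα0⟩ := hmem _ e0.2
  set H' : SimpleGraph (Fin N) := H.deleteEdges {s(i0, j0)} with hH'
  set Sf : Finset (Fin N) := Finset.univ.filter (fun u => H'.Reachable i0 u) with hSf
  have hi0S : i0 ∈ Sf := by
    simp only [hSf, Finset.mem_filter, Finset.mem_univ, true_and]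
    exact SimpleGraph.Reachable.refl _
  have hj0S : j0 ∉ Sf := by
    simp only [hSf, Finset.mem_filter, Finset.mem_univ, true_and]
    intro hr
    obtain ⟨p⟩ := hr.symm
    set pp := p.toPath with hpp
    have hedges : ∀ e ∈ (pp : H'.Walk j0 i0).edges, e ∈ H.edgeSet := by
      intro e he
      exact edgeSet_mono (SimpleGraph.deleteEdges_le _)
        ((pp : H'.Walk j0 i0).edges_subset_edgeSet he)
    set q := (pp : H'.Walk j0 i0).transfer H hedges with hq
    have hqpath : q.IsPath := pp.2.transfer hedges
    have hnotin : s(i0, j0) ∉ q.edges := by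
      rw [hq, Walk.edges_transfer]
      intro hin
      have := (pp : H'.Walk j0 i0).edges_subset_edgeSet hin
      rw [SimpleGraph.edgeSet_deleteEdges] at this
      exact this.2 rfl
    have hAdj : H.Adj i0 j0 := hHadj (he0x ▸ e0.2) hadj0.ne
    exact hacyc i0 _ ((Walk.cons_isCycle_iff q hAdj).mpr ⟨hqpath, hnotin⟩)
  let φ : (Fin N → ℝ) →ₗ[ℝ] ℝ :=
    { toFun := fun x => ∑ u ∈ Sf, x u
      map_add' := fun x y => by simp [Finset.sum_add_distrib]
      map_smul' := fun r x => by simp [Finset.mul_sum] }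
  have hφb : ∀ a : Fin N, φ (stdBasis a) = if a ∈ Sf then 1 else 0 := by
    intro a
    show (∑ u ∈ Sf, stdBasis a u) = _
    simp only [stdBasis_apply, Finset.sum_ite_eq', Finset.mem_univ, if_true]
  have hcross : ∀ {a b : Fin N}, H'.Adj a b → (a ∈ Sf ↔ b ∈ Sf) := by
    intro a b hab
    simp only [hSf, Finset.mem_filter, Finset.mem_univ, true_and]
    exact ⟨fun h => h.trans hab.reachable, fun h => h.trans hab.symm.reachable⟩
  have hφF : ∀ (e : {x // x ∈ F}), e ≠ e0 → φ ↑e = 0 := by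
    intro e hne
    obtain ⟨a, b, hadj, hx, hαab⟩ := hmem _ e.2
    have hab := hadj.ne
    have hSym : s(a, b) ≠ s(i0, j0) := by
      intro hs
      rcases Sym2.eq_iff.mp hs with ⟨rfl, rfl⟩ | ⟨rfl, rfl⟩
      · exact hne (Subtype.ext (hx.trans he0x.symm))
      · linarith
    have hH'ab : H'.Adj a b := by
      rw [hH', SimpleGraph.deleteEdges_adj]
      exact ⟨hHadj (hx ▸ e.2) hab, by simpa using hSym⟩
    have hiff := hcross hH'ab
    rw [hx, map_sub, hφb, hφb]
    by_cases ha : a ∈ Sf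
    · rw [if_pos ha, if_pos (hiff.mp ha), sub_self]
    · rw [if_neg ha, if_neg (fun hb => ha (hiff.mpr hb)), sub_self]
  have hφ0 : φ ↑e0 = 1 := by
    rw [he0x, map_sub, hφb, hφb, if_pos hi0S, if_neg hj0S, sub_zero]
  have happ : φ (∑ e ∈ s, w e • (e : Fin N → ℝ)) = w e0 := by
    rw [map_sum]
    simp_rw [map_smul]
    rw [Finset.sum_eq_single e0]
    · rw [hφ0]; simp
    · intro e hes hne; rw [hφF e hne]; simp
    · intro h; exact absurd he0 h
  rw [hsum, map_zero] at happ
  exact happ.symm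

end Nabla19

theorem stmt19 {N : ℕ} (G : SimpleGraph (Fin N)) (hG : G.Connected) :
    (∀ F : Set (Fin N → ℝ), IsFacet G F →
        AffineIndependent ℝ (fun x : F => (x : Fin N → ℝ))) ↔
    (∀ (v : Fin N) (c : G.Walk v v), c.IsCycle → ¬ Even c.length) := by
  constructor
  · intro hL v c hc hev
    obtain ⟨F, hFac, hdep⟩ := Nabla19.facet_of_even_cycle hG c hc hev
    exact hdep (hL F hFac)
  · intro hno F hF
    obtain ⟨⟨α, hb, rfl⟩, hd⟩ := hF
    exact Nabla19.indep_of_no_even G hno α
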